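/- No compatible almost Hermitian structure J on 𝔤₃ has totally skew-symmetric Nijenhuis trilinear form: there is no such J for which (X,Y,Z) ↦ ⟨N(X,Y),Z⟩ is alternating (i.e. the Gray–Hervella class 𝒵₁₃₄ = {W₂ = 0} is empty). In particular, no compatible J on (𝔤₃, g) is integrable: the 3-step nilmanifold M₃ admits no invariant Hermitian structure compatible with the standard metric. -/

import Mathlib

noncomputable section

/-- The standard inner product on `ℝ⁶ = Fin 6 → ℝ`. -/
def ip (x y : Fin 6 → ℝ) : ℝ := ∑ i, x i * y i

/-- The standard basis vectors `e₁, …, e₆` (0-indexed). -/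
def E (i : Fin 6) : Fin 6 → ℝ := fun j => if j = i then 1 else 0

/-- The 2-form `e^{i+1,j+1} = e^{i+1} ∧ e^{j+1}` (0-indexed coordinates). -/
def ew (i j : Fin 6) (X Y : Fin 6 → ℝ) : ℝ := X i * Y j - X j * Y i

/-- The wedge of the 1-forms dual (via `ip`) to the vectors `u`, `w`. -/
def w11 (u w : Fin 6 → ℝ) (X Y : Fin 6 → ℝ) : ℝ := ip u X * ip w Y - ip u Y * ip w X

/-- The wedge `σ ∧ α` of a 2-form with a 1-form. -/
def w21 (σ : (Fin 6 → ℝ) → (Fin 6 → ℝ) → ℝ) (α : (Fin 6 → ℝ) → ℝ)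
    (X Y Z : Fin 6 → ℝ) : ℝ := σ X Y * α Z - σ X Z * α Y + σ Y Z * α X

/-- The wedge `σ ∧ τ` of two 2-forms, a 4-form. -/
def w22 (σ τ : (Fin 6 → ℝ) → (Fin 6 → ℝ) → ℝ) (v : Fin 4 → (Fin 6 → ℝ)) : ℝ :=
  (1/4) * ∑ π : Equiv.Perm (Fin 4), ((Equiv.Perm.sign π : ℤ) : ℝ) *
    (σ (v (π 0)) (v (π 1)) * τ (v (π 2)) (v (π 3)))

/-- The wedge `σ ∧ τ ∧ ρ` of three 2-forms, a 6-form. -/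
def w222 (σ τ ρ : (Fin 6 → ℝ) → (Fin 6 → ℝ) → ℝ) (v : Fin 6 → (Fin 6 → ℝ)) : ℝ :=
  (1/8) * ∑ π : Equiv.Perm (Fin 6), ((Equiv.Perm.sign π : ℤ) : ℝ) *
    (σ (v (π 0)) (v (π 1)) * τ (v (π 2)) (v (π 3)) * ρ (v (π 4)) (v (π 5)))

/-- The wedge `σ ∧ τ` of a 3-form and a 2-form, a 5-form. -/
def w32 (σ : (Fin 6 → ℝ) → (Fin 6 → ℝ) → (Fin 6 → ℝ) → ℝ)
    (τ : (Fin 6 → ℝ) → (Fin 6 → ℝ) → ℝ) (v : Fin 5 → (Fin 6 → ℝ)) : ℝ :=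
  (1/12) * ∑ π : Equiv.Perm (Fin 5), ((Equiv.Perm.sign π : ℤ) : ℝ) *
    (σ (v (π 0)) (v (π 1)) (v (π 2)) * τ (v (π 3)) (v (π 4)))

/-- The wedge of the four 1-forms dual to the vectors `f 0, f 1, f 2, f 3`. -/
def w1111 (f : Fin 4 → (Fin 6 → ℝ)) (v : Fin 4 → (Fin 6 → ℝ)) : ℝ :=
  ∑ π : Equiv.Perm (Fin 4), ((Equiv.Perm.sign π : ℤ) : ℝ) * ∏ i, ip (f i) (v (π i))

/-- The standard volume 6-form `e^{123456}`. -/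
def vol (v : Fin 6 → (Fin 6 → ℝ)) : ℝ := Matrix.det (Matrix.of fun i j => v j i)

/-- The 4-form `e^{1234}`. -/
def e1234 (v : Fin 4 → (Fin 6 → ℝ)) : ℝ :=
  Matrix.det (Matrix.of fun i j : Fin 4 => v j (Fin.castLE (by norm_num) i))

/-- `J` is a linear map. -/
def IsLin (J : (Fin 6 → ℝ) → (Fin 6 → ℝ)) : Prop :=
  (∀ x y, J (x + y) = J x + J y) ∧ (∀ (c : ℝ) (x), J (c • x) = c • J x)

/-- `J` is a compatible almost Hermitian structure: an orthogonal linear complex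
structure whose fundamental 2-form `ω(X,Y) = ⟨JX,Y⟩` satisfies `ω∧ω∧ω = 6·e^{123456}`. -/
def Compatible (J : (Fin 6 → ℝ) → (Fin 6 → ℝ)) : Prop :=
  IsLin J ∧ (∀ x, J (J x) = -x) ∧ (∀ x y, ip (J x) (J y) = ip x y) ∧
    (∀ v, w222 (fun X Y => ip (J X) Y) (fun X Y => ip (J X) Y) (fun X Y => ip (J X) Y) v
      = 6 * vol v)

/-- The Chevalley–Eilenberg differential of a 2-form, for the bracket `b`. -/
def dd (b : (Fin 6 → ℝ) → (Fin 6 → ℝ) → (Fin 6 → ℝ))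
    (ω : (Fin 6 → ℝ) → (Fin 6 → ℝ) → ℝ) (X Y Z : Fin 6 → ℝ) : ℝ :=
  -ω (b X Y) Z + ω (b X Z) Y - ω (b Y Z) X

/-- The Nijenhuis tensor of `J`, for the bracket `b`. -/
def nij (b : (Fin 6 → ℝ) → (Fin 6 → ℝ) → (Fin 6 → ℝ))
    (J : (Fin 6 → ℝ) → (Fin 6 → ℝ)) (X Y : Fin 6 → ℝ) : Fin 6 → ℝ :=
  b (J X) (J Y) - b X Y - J (b (J X) Y) - J (b X (J Y))

/-- The Chevalley–Eilenberg differential of a 4-form, for the bracket `b`. -/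
def dd4 (b : (Fin 6 → ℝ) → (Fin 6 → ℝ) → (Fin 6 → ℝ))
    (F : (Fin 4 → (Fin 6 → ℝ)) → ℝ) (v : Fin 5 → (Fin 6 → ℝ)) : ℝ :=
  ∑ i : Fin 5, ∑ j : Fin 5,
    if h : i < j then
      ((-1 : ℝ)) ^ (i.val + j.val) * F (Fin.cons (b (v i) (v j))
        (fun m : Fin 3 => v (j.succAbove
          ((⟨i.val, by have h1 : i.val < j.val := h; have h2 : j.val < 5 := j.isLt; omega⟩ :
            Fin 4).succAbove m))))
    else 0

/-- The Lie bracket of the real Lie algebra `𝔤_H` of the complex Heisenberg group: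
`[e₁,e₃] = −e₅`, `[e₂,e₄] = e₅`, `[e₁,e₄] = −e₆`, `[e₂,e₃] = −e₆`. -/
def bH (x y : Fin 6 → ℝ) : Fin 6 → ℝ := fun k =>
  if k = 4 then -(x 0 * y 2 - x 2 * y 0) + (x 1 * y 3 - x 3 * y 1)
  else if k = 5 then -(x 0 * y 3 - x 3 * y 0) - (x 1 * y 2 - x 2 * y 1)
  else 0

/-- The Lie bracket of `𝔤₂`: `[e₁,e₂] = −e₅`, `[e₁,e₄] = −e₆`, `[e₂,e₃] = −e₆`. -/
def b2 (x y : Fin 6 → ℝ) : Fin 6 → ℝ := fun k =>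
  if k = 4 then -(x 0 * y 1 - x 1 * y 0)
  else if k = 5 then -(x 0 * y 3 - x 3 * y 0) - (x 1 * y 2 - x 2 * y 1)
  else 0

/-- The Lie bracket of the 3-step algebra `𝔤₃`: `[e₁,e₂] = −e₅`, `[e₁,e₅] = −e₆`,
`[e₃,e₄] = −e₆`. -/
def b3 (x y : Fin 6 → ℝ) : Fin 6 → ℝ := fun k =>
  if k = 4 then -(x 0 * y 1 - x 1 * y 0)
  else if k = 5 then -(x 0 * y 4 - x 4 * y 0) - (x 2 * y 3 - x 3 * y 2)
  else 0

/-- Membership in the 3-sphere `𝒮` of 2-forms `e⁵∧f¹ + f²∧e⁶ + f³∧f⁴`,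
where `(f¹,f²,f³,f⁴)` is an orthonormal basis of `𝔻 = span(e¹,e²,e³,e⁴)` with
`f¹∧f²∧f³∧f⁴ = e^{1234}` and `f¹∧f² + f³∧f⁴ = e^{12} + e^{34}`. -/
def memS (ω : (Fin 6 → ℝ) → (Fin 6 → ℝ) → ℝ) : Prop :=
  ∃ f : Fin 4 → (Fin 6 → ℝ),
    (∀ i, f i 4 = 0 ∧ f i 5 = 0) ∧
    (∀ i j, ip (f i) (f j) = if i = j then 1 else 0) ∧
    (∀ v, w1111 f v = e1234 v) ∧
    (∀ X Y, w11 (f 0) (f 1) X Y + w11 (f 2) (f 3) X Y = ew 0 1 X Y + ew 2 3 X Y) ∧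
    (∀ X Y, ω X Y = w11 (E 4) (f 0) X Y + w11 (f 1) (E 5) X Y + w11 (f 2) (f 3) X Y)

/-! ### Auxiliary material for `stmt16` -/

section Stmt16Aux

lemma ip_six (x y : Fin 6 → ℝ) :
    ip x y = x 0 * y 0 + x 1 * y 1 + x 2 * y 2 + x 3 * y 3 + x 4 * y 4 + x 5 * y 5 := by
  simp [ip, Fin.sum_univ_six]

lemma E_val (i j : Fin 6) : E i j = if j = i then (1:ℝ) else 0 := rfl

lemma ip_E_right (x : Fin 6 → ℝ) (i : Fin 6) : ip x (E i) = x i := by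
  fin_cases i <;> simp [ip_six, E_val]

lemma ip_E_left (x : Fin 6 → ℝ) (i : Fin 6) : ip (E i) x = x i := by
  fin_cases i <;> simp [ip_six, E_val]

lemma ip_zero_left (y : Fin 6 → ℝ) : ip 0 y = 0 := by simp [ip_six]

lemma ip_zero_right (y : Fin 6 → ℝ) : ip y 0 = 0 := by simp [ip_six]

lemma ip_comm' (x y : Fin 6 → ℝ) : ip x y = ip y x := by rw [ip_six, ip_six]; ring

lemma ip_add_right (x y z : Fin 6 → ℝ) : ip x (y + z) = ip x y + ip x z := by
  simp only [ip_six, Pi.add_apply]; ring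

lemma ip_sub_right (x y z : Fin 6 → ℝ) : ip x (y - z) = ip x y - ip x z := by
  simp only [ip_six, Pi.sub_apply]; ring

lemma ip_smul_right (x : Fin 6 → ℝ) (c : ℝ) (y : Fin 6 → ℝ) : ip x (c • y) = c * ip x y := by
  simp only [ip_six, Pi.smul_apply, smul_eq_mul]; ring

lemma ip_self_zero {x : Fin 6 → ℝ} (h : ip x x = 0) : x = 0 := by
  rw [ip_six] at h
  have h0 : x 0 = 0 := by nlinarith [mul_self_nonneg (x 0), mul_self_nonneg (x 1), mul_self_nonneg (x 2), mul_self_nonneg (x 3), mul_self_nonneg (x 4), mul_self_nonneg (x 5)]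
  have h1 : x 1 = 0 := by nlinarith [mul_self_nonneg (x 0), mul_self_nonneg (x 1), mul_self_nonneg (x 2), mul_self_nonneg (x 3), mul_self_nonneg (x 4), mul_self_nonneg (x 5)]
  have h2 : x 2 = 0 := by nlinarith [mul_self_nonneg (x 0), mul_self_nonneg (x 1), mul_self_nonneg (x 2), mul_self_nonneg (x 3), mul_self_nonneg (x 4), mul_self_nonneg (x 5)]
  have h3 : x 3 = 0 := by nlinarith [mul_self_nonneg (x 0), mul_self_nonneg (x 1), mul_self_nonneg (x 2), mul_self_nonneg (x 3), mul_self_nonneg (x 4), mul_self_nonneg (x 5)]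
  have h4 : x 4 = 0 := by nlinarith [mul_self_nonneg (x 0), mul_self_nonneg (x 1), mul_self_nonneg (x 2), mul_self_nonneg (x 3), mul_self_nonneg (x 4), mul_self_nonneg (x 5)]
  have h5 : x 5 = 0 := by nlinarith [mul_self_nonneg (x 0), mul_self_nonneg (x 1), mul_self_nonneg (x 2), mul_self_nonneg (x 3), mul_self_nonneg (x 4), mul_self_nonneg (x 5)]
  funext i
  fin_cases i <;> simp [h0, h1, h2, h3, h4, h5]

/-- The 2-form `β = e¹∧e²` (0-indexed coordinates 0,1). -/
def sbb (x y : Fin 6 → ℝ) : ℝ := x 0 * y 1 - x 1 * y 0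

/-- The 2-form `γ = e¹∧e⁵ + e³∧e⁴` (0-indexed coordinates). -/
def sgg (x y : Fin 6 → ℝ) : ℝ := x 0 * y 4 - x 4 * y 0 + (x 2 * y 3 - x 3 * y 2)

lemma b3_eq (x y : Fin 6 → ℝ) : b3 x y = (-(sbb x y)) • E 4 + (-(sgg x y)) • E 5 := by
  funext k
  fin_cases k <;> (simp [b3, sbb, sgg, E_val]; try ring)

end Stmt16Aux

/-- On the 3-step algebra `𝔤₃`, no compatible almost Hermitian structure
has totally skew-symmetric Nijenhuis trilinear form (`𝒵₁₃₄ = {W₂ = 0}` is empty); in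
particular no compatible `J` is integrable: `M₃` admits no invariant Hermitian structure
compatible with the standard metric. -/

theorem stmt16 :
    (∀ J : (Fin 6 → ℝ) → (Fin 6 → ℝ), Compatible J →
      ¬(∀ X Y Z, ip (nij b3 J Y X) Z = -ip (nij b3 J X Y) Z ∧
          ip (nij b3 J X Z) Y = -ip (nij b3 J X Y) Z)) ∧
    (∀ J : (Fin 6 → ℝ) → (Fin 6 → ℝ), Compatible J → ¬(∀ X Y, nij b3 J X Y = 0)) := by
  have main : ∀ J : (Fin 6 → ℝ) → (Fin 6 → ℝ), Compatible J →
      ¬(∀ X Y Z, ip (nij b3 J Y X) Z = -ip (nij b3 J X Y) Z ∧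
          ip (nij b3 J X Z) Y = -ip (nij b3 J X Y) Z) := by
    intro J hJ hsw
    obtain ⟨⟨hadd, hsmul⟩, hJJ, hIP, -⟩ := hJ
    have hJneg : ∀ x, J (-x) = -J x := by
      intro x
      have h := hsmul (-1) x
      simpa using h
    have hJ0 : J 0 = 0 := by
      have h := hsmul 0 0
      simpa using h
    have skewadj : ∀ x y, ip (J x) y = -ip x (J y) := by
      intro x y
      have h := hIP x (J y)
      rw [hJJ y] at h
      have h2 : ip (J x) (-y) = -ip (J x) y := by
        simp only [ip_six, Pi.neg_apply]; ring
      rw [h2] at h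
      linarith
    have ipJself : ∀ x, ip (J x) x = 0 := by
      intro x
      have h := skewadj x x
      rw [ip_comm' x (J x)] at h
      linarith
    -- The key formula for the Nijenhuis tensor of J on 𝔤₃.
    have Nf : ∀ X Y, nij b3 J X Y =
        (sbb X Y - sbb (J X) (J Y)) • E 4 + (sbb (J X) Y + sbb X (J Y)) • J (E 4)
        + (sgg X Y - sgg (J X) (J Y)) • E 5 + (sgg (J X) Y + sgg X (J Y)) • J (E 5) := by
      have Jcomb : ∀ (a b : ℝ), J (a • E 4 + b • E 5) = a • J (E 4) + b • J (E 5) := by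
        intro a b; rw [hadd, hsmul, hsmul]
      intro X Y
      show b3 (J X) (J Y) - b3 X Y - J (b3 (J X) Y) - J (b3 X (J Y)) = _
      rw [b3_eq (J X) (J Y), b3_eq X Y, b3_eq (J X) Y, b3_eq X (J Y), Jcomb, Jcomb]
      funext i
      simp only [Pi.add_apply, Pi.sub_apply, Pi.smul_apply, smul_eq_mul]
      ring
    obtain ⟨t, ht⟩ : ∃ t, ip (J (E 4)) (E 5) = t := ⟨_, rfl⟩
    -- inner product values on E 4, J (E 4), E 5, J (E 5)
    have v44 : ip (E 4) (E 4) = 1 := by simp [ip_six, E_val]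
    have v45 : ip (E 4) (E 5) = 0 := by simp [ip_six, E_val]
    have v54 : ip (E 5) (E 4) = 0 := by simp [ip_six, E_val]
    have v55 : ip (E 5) (E 5) = 1 := by simp [ip_six, E_val]
    have g44 : ip (J (E 4)) (J (E 4)) = 1 := by rw [hIP]; exact v44
    have g45 : ip (J (E 4)) (J (E 5)) = 0 := by rw [hIP]; exact v45
    have g54 : ip (J (E 5)) (J (E 4)) = 0 := by rw [hIP]; exact v54
    have g55 : ip (J (E 5)) (J (E 5)) = 1 := by rw [hIP]; exact v55
    have j4e4 : ip (J (E 4)) (E 4) = 0 := ipJself (E 4)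
    have j5e5 : ip (J (E 5)) (E 5) = 0 := ipJself (E 5)
    have j5e4 : ip (J (E 5)) (E 4) = -t := by
      rw [skewadj, ip_comm', ht]
    have w12 : ip (E 4) (J (E 4)) = 0 := by rw [ip_comm']; exact j4e4
    have w14 : ip (E 4) (J (E 5)) = -t := by rw [ip_comm']; exact j5e4
    have w23 : ip (E 5) (J (E 4)) = t := by rw [ip_comm']; exact ht
    have w24 : ip (E 5) (J (E 5)) = 0 := by rw [ip_comm']; exact j5e5
    -- component values
    have c44 : (J (E 4)) 4 = 0 := by rw [← ip_E_right (J (E 4)) 4]; exact j4e4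
    have c45 : (J (E 4)) 5 = t := by rw [← ip_E_right (J (E 4)) 5]; exact ht
    have c54 : (J (E 5)) 4 = -t := by rw [← ip_E_right (J (E 5)) 4]; exact j5e4
    have c55 : (J (E 5)) 5 = 0 := by rw [← ip_E_right (J (E 5)) 5]; exact j5e5
    -- the trilinear form
    have Af : ∀ X Y Z, ip (nij b3 J X Y) Z =
        (sbb X Y - sbb (J X) (J Y)) * Z 4 + (sbb (J X) Y + sbb X (J Y)) * ip (J (E 4)) Z
        + (sgg X Y - sgg (J X) (J Y)) * Z 5 + (sgg (J X) Y + sgg X (J Y)) * ip (J (E 5)) Z := by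
      intro X Y Z
      rw [Nf X Y]
      simp [ip_six, E_val]
      ring
    -- algebraic identities of nij
    have moveJ : ∀ X Y, nij b3 J (J X) Y = nij b3 J X (J Y) := by
      intro X Y
      rw [Nf (J X) Y, Nf X (J Y), hJJ X, hJJ Y]
      funext i
      simp only [Pi.add_apply, Pi.smul_apply, smul_eq_mul, Pi.neg_apply, sbb, sgg]
      ring
    have nij_negr : ∀ X Y, nij b3 J X (-Y) = -nij b3 J X Y := by
      intro X Y
      rw [Nf X (-Y), Nf X Y, hJneg Y]
      funext i
      simp only [Pi.add_apply, Pi.smul_apply, smul_eq_mul, Pi.neg_apply, sbb, sgg]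
      ring
    have Jswap : ∀ X Y, nij b3 J (J X) (J Y) = -nij b3 J X Y := by
      intro X Y
      rw [moveJ X (J Y), hJJ Y, nij_negr]
    have nij_anti : ∀ X Y, nij b3 J X Y = -nij b3 J Y X := by
      intro X Y
      rw [Nf X Y, Nf Y X]
      funext i
      simp only [Pi.add_apply, Pi.smul_apply, smul_eq_mul, Pi.neg_apply, sbb, sgg]
      ring
    have nij_diag : ∀ X, nij b3 J X X = 0 := by
      intro X
      have h := nij_anti X X
      funext i
      have h2 := congrFun h i
      simp only [Pi.neg_apply] at h2
      simp only [Pi.zero_apply]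
      linarith
    have nij_addl : ∀ X X' Y, nij b3 J (X + X') Y = nij b3 J X Y + nij b3 J X' Y := by
      intro X X' Y
      rw [Nf (X + X') Y, Nf X Y, Nf X' Y, hadd X X']
      funext i
      simp only [Pi.add_apply, Pi.smul_apply, smul_eq_mul, sbb, sgg]
      ring
    have nij_addr : ∀ X Y Y', nij b3 J X (Y + Y') = nij b3 J X Y + nij b3 J X Y' := by
      intro X Y Y'
      rw [Nf X (Y + Y'), Nf X Y, Nf X Y', hadd Y Y']
      funext i
      simp only [Pi.add_apply, Pi.smul_apply, smul_eq_mul, sbb, sgg]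
      ring
    have nij_smull : ∀ (c : ℝ) X Y, nij b3 J (c • X) Y = c • nij b3 J X Y := by
      intro c X Y
      rw [Nf (c • X) Y, Nf X Y, hsmul c X]
      funext i
      simp only [Pi.add_apply, Pi.smul_apply, smul_eq_mul, sbb, sgg]
      ring
    have nij_smulr : ∀ (c : ℝ) X Y, nij b3 J X (c • Y) = c • nij b3 J X Y := by
      intro c X Y
      rw [Nf X (c • Y), Nf X Y, hsmul c Y]
      funext i
      simp only [Pi.add_apply, Pi.smul_apply, smul_eq_mul, sbb, sgg]
      ring
    -- skew-symmetry consequences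
    have cyc : ∀ X Y Z, ip (nij b3 J Z X) Y = ip (nij b3 J X Y) Z := by
      intro X Y Z
      rw [(hsw X Z Y).1, (hsw X Y Z).2, neg_neg]
    have rep23 : ∀ X Y, ip (nij b3 J X Y) Y = 0 := by
      intro X Y
      have h := (hsw X Y Y).2
      linarith
    have rep13 : ∀ X Y, ip (nij b3 J X Y) X = 0 := by
      intro X Y
      rw [← cyc X Y X, nij_diag, ip_zero_left]
    have pself : ∀ X, nij b3 J X (J X) = 0 := by
      intro X
      have h := Jswap X (J X)
      rw [hJJ X, nij_negr, nij_anti (J X) X] at h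
      funext i
      have h2 := congrFun h i
      simp only [Pi.neg_apply, neg_neg] at h2
      simp only [Pi.zero_apply]
      linarith
    rcases eq_or_ne (t * t) 1 with hdeg | hnd
    · -- degenerate case : J (E 4) = t • E 5
      have hz : ip (J (E 4) - t • E 5) (J (E 4) - t • E 5) = 0 := by
        have e1 : ip (J (E 4) - t • E 5) (J (E 4) - t • E 5)
            = ip (J (E 4)) (J (E 4)) - t * ip (J (E 4)) (E 5) - t * ip (E 5) (J (E 4))
              + t * t * ip (E 5) (E 5) := by
          simp only [ip_six, Pi.sub_apply, Pi.smul_apply, smul_eq_mul]; ring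
        rw [e1, g44, ht, w23, v55]
        linarith
      have hJ4 : J (E 4) = t • E 5 := by
        have hD := ip_self_zero hz
        rwa [sub_eq_zero] at hD
      have hJ5 : J (E 5) = -(t • E 4) := by
        have h := hJJ (E 4)
        rw [hJ4, hsmul] at h
        have h2 := congrArg (fun v => t • v) h
        simp only [smul_smul, hdeg, one_smul, smul_neg] at h2
        rw [h2]
      have A1 : ip (nij b3 J (E 0) (E 5)) (E 4) = 1 := by
        rw [Af, hJ4, hJ5]
        simp [sbb, sgg, ip_six, E_val]
        try first
        | linear_combination hdeg
        | linear_combination -hdeg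
        | ring
      have A2 : ip (nij b3 J (E 4) (E 0)) (E 5) = -1 := by
        rw [Af, hJ4, hJ5]
        simp [sbb, sgg, ip_six, E_val]
        try first
        | linear_combination hdeg
        | linear_combination -hdeg
        | ring
      have hc := cyc (E 0) (E 5) (E 4)
      rw [A1, A2] at hc
      norm_num at hc
    · -- nondegenerate case
      have hd : (1 : ℝ) - t * t ≠ 0 := fun h => hnd (by linarith)
      have extrC : ∀ c1 c2 c3 c4 : ℝ, c1 - t * c4 = 0 → c2 + t * c3 = 0 →
          t * c2 + c3 = 0 → c4 - t * c1 = 0 → c1 = 0 ∧ c2 = 0 ∧ c3 = 0 ∧ c4 = 0 := by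
        intro c1 c2 c3 c4 h1 h2 h3 h4
        have k1 : c1 * (1 - t * t) = 0 := by linear_combination h1 + t * h4
        have k2 : c2 * (1 - t * t) = 0 := by linear_combination h2 - t * h3
        have k1' : c1 = 0 := by
          rcases mul_eq_zero.1 k1 with h | h
          · exact h
          · exact absurd h hd
        have k2' : c2 = 0 := by
          rcases mul_eq_zero.1 k2 with h | h
          · exact h
          · exact absurd h hd
        refine ⟨k1', k2', by rw [k2'] at h3; linarith, by rw [k1'] at h4; linarith⟩
      have vanish_all : ∀ X Y,
          ip (nij b3 J X Y) (E 4) = 0 → ip (nij b3 J X Y) (J (E 4)) = 0 →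
          ip (nij b3 J X Y) (E 5) = 0 → ip (nij b3 J X Y) (J (E 5)) = 0 →
          nij b3 J X Y = 0 := by
        intro X Y h1 h2 h3 h4
        rw [Af X Y (E 4), j4e4, j5e4] at h1
        rw [Af X Y (J (E 4)), c44, c45, g44, g54] at h2
        rw [Af X Y (E 5), ht, j5e5] at h3
        rw [Af X Y (J (E 5)), c54, c55, g45, g55] at h4
        simp [E_val] at h1 h3
        obtain ⟨k1, k2, k3, k4⟩ := extrC (sbb X Y - sbb (J X) (J Y)) (sbb (J X) Y + sbb X (J Y))
          (sgg X Y - sgg (J X) (J Y)) (sgg (J X) Y + sgg X (J Y))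
          (by linear_combination h1) (by linear_combination h2)
          (by linear_combination h3) (by linear_combination h4)
        rw [Nf X Y, k1, k2, k3, k4]
        simp
      have hN45 : nij b3 J (E 4) (E 5) = 0 := by
        apply vanish_all
        · exact rep13 (E 4) (E 5)
        · rw [← cyc (E 4) (E 5) (J (E 4)), moveJ (E 4) (E 4), pself (E 4), ip_zero_left]
        · exact rep23 (E 4) (E 5)
        · rw [(hsw (E 4) (J (E 5)) (E 5)).2, ← moveJ (E 4) (E 5), rep23 (J (E 4)) (E 5), neg_zero]
      have hNJ45 : nij b3 J (J (E 4)) (E 5) = 0 := by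
        apply vanish_all
        · rw [cyc (E 5) (E 4) (J (E 4)), nij_anti (E 5) (E 4), hN45]
          simp [ip_six]
        · exact rep13 (J (E 4)) (E 5)
        · exact rep23 (J (E 4)) (E 5)
        · rw [cyc (E 5) (J (E 5)) (J (E 4)), pself (E 5), ip_zero_left]
      have hN4J5 : nij b3 J (E 4) (J (E 5)) = 0 := by rw [← moveJ]; exact hNJ45
      have hNJ4J5 : nij b3 J (J (E 4)) (J (E 5)) = 0 := by rw [Jswap, hN45, neg_zero]
      have r1 : nij b3 J (J (E 4)) (E 4) = 0 := by
        rw [nij_anti, pself (E 4), neg_zero]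
      have r2 : nij b3 J (E 5) (E 4) = 0 := by rw [nij_anti, hN45, neg_zero]
      have r3 : nij b3 J (J (E 5)) (E 4) = 0 := by rw [nij_anti, hN4J5, neg_zero]
      have r4 : nij b3 J (E 5) (J (E 4)) = 0 := by rw [nij_anti, hNJ45, neg_zero]
      have r5 : nij b3 J (J (E 5)) (J (E 4)) = 0 := by rw [nij_anti, hNJ4J5, neg_zero]
      have r6 : nij b3 J (J (E 5)) (E 5) = 0 := by rw [nij_anti, pself (E 5), neg_zero]
      have perp0 : ∀ Z, Z 4 = 0 → Z 5 = 0 → ip (J (E 4)) Z = 0 → ip (J (E 5)) Z = 0 →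
          ∀ X, nij b3 J Z X = 0 := by
        intro Z h4 h5 hj4 hj5 X
        apply ip_self_zero
        rw [cyc X (nij b3 J Z X) Z, Af, h4, h5, hj4, hj5]
        ring
      have decomp : ∀ X : Fin 6 → ℝ, ∃ (a1 a2 a3 a4 : ℝ) (X' : Fin 6 → ℝ),
          X = (a1 • E 4 + a2 • J (E 4) + a3 • E 5 + a4 • J (E 5)) + X' ∧
          X' 4 = 0 ∧ X' 5 = 0 ∧ ip (J (E 4)) X' = 0 ∧ ip (J (E 5)) X' = 0 := by
        intro X
        refine ⟨(X 4 + t * ip (J (E 5)) X) / (1 - t * t),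
                (ip (J (E 4)) X - t * X 5) / (1 - t * t),
                (X 5 - t * ip (J (E 4)) X) / (1 - t * t),
                (ip (J (E 5)) X + t * X 4) / (1 - t * t),
                X - (((X 4 + t * ip (J (E 5)) X) / (1 - t * t)) • E 4
                  + ((ip (J (E 4)) X - t * X 5) / (1 - t * t)) • J (E 4)
                  + ((X 5 - t * ip (J (E 4)) X) / (1 - t * t)) • E 5
                  + ((ip (J (E 5)) X + t * X 4) / (1 - t * t)) • J (E 5)), by abel, ?_, ?_, ?_, ?_⟩
        · simp [E_val, c44, c54]
          have hd2 : (1:ℝ) - t ^ 2 ≠ 0 := by rw [sq]; exact hd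
          field_simp
          ring
        · simp [E_val, c45, c55]
          have hd2 : (1:ℝ) - t ^ 2 ≠ 0 := by rw [sq]; exact hd
          field_simp
          ring
        · rw [ip_sub_right, ip_add_right, ip_add_right, ip_add_right,
            ip_smul_right, ip_smul_right, ip_smul_right, ip_smul_right,
            j4e4, g44, ht, g45]
          have hd2 : (1:ℝ) - t ^ 2 ≠ 0 := by rw [sq]; exact hd
          field_simp
          ring
        · rw [ip_sub_right, ip_add_right, ip_add_right, ip_add_right,
            ip_smul_right, ip_smul_right, ip_smul_right, ip_smul_right,
            j5e4, g54, j5e5, g55]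
          have hd2 : (1:ℝ) - t ^ 2 ≠ 0 := by rw [sq]; exact hd
          field_simp
          ring
      have hNall : ∀ X Y, nij b3 J X Y = 0 := by
        intro X Y
        obtain ⟨a1, a2, a3, a4, X', hX, hx4, hx5, hxj4, hxj5⟩ := decomp X
        obtain ⟨e1, e2, e3, e4, Y', hY, hy4, hy5, hyj4, hyj5⟩ := decomp Y
        have hX'z : ∀ W, nij b3 J X' W = 0 := perp0 X' hx4 hx5 hxj4 hxj5
        have hY'z : ∀ W, nij b3 J W Y' = 0 := by
          intro W
          rw [nij_anti, perp0 Y' hy4 hy5 hyj4 hyj5 W, neg_zero]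
        rw [hX, hY]
        simp only [nij_addl, nij_addr, nij_smull, nij_smulr, hX'z, hY'z,
          hN45, hNJ45, hN4J5, hNJ4J5, r1, r2, r3, r4, r5, r6, nij_diag, pself,
          smul_zero, add_zero, zero_add]
      -- extract that β and γ are J-invariant, then derive a contradiction
      have sbbneg : ∀ x y : Fin 6 → ℝ, sbb x (-y) = -sbb x y := by
        intro x y; simp only [sbb, Pi.neg_apply]; ring
      have sggneg : ∀ x y : Fin 6 → ℝ, sgg x (-y) = -sgg x y := by
        intro x y; simp only [sgg, Pi.neg_apply]; ring
      have coeffs : ∀ X Y, (sbb X Y - sbb (J X) (J Y) = 0) ∧ (sgg X Y - sgg (J X) (J Y) = 0) := by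
        intro X Y
        have h := hNall X Y
        rw [Nf X Y] at h
        have q1 := congrArg (fun v => ip (E 4) v) h
        have q2 := congrArg (fun v => ip (J (E 4)) v) h
        have q3 := congrArg (fun v => ip (E 5) v) h
        have q4 := congrArg (fun v => ip (J (E 5)) v) h
        simp only [ip_add_right, ip_smul_right, ip_zero_right, v44, v45, v54, v55, w12, w14,
          w23, w24, j4e4, j5e4, j5e5, ht, g44, g45, g54, g55] at q1 q2 q3 q4
        obtain ⟨k1, k2, k3, k4⟩ := extrC (sbb X Y - sbb (J X) (J Y)) (sbb (J X) Y + sbb X (J Y))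
          (sgg X Y - sgg (J X) (J Y)) (sgg (J X) Y + sgg X (J Y))
          (by linear_combination q1) (by linear_combination q2)
          (by linear_combination q3) (by linear_combination q4)
        exact ⟨k1, k3⟩
      have hbk : ∀ x y, sbb x (J y) + sbb (J x) y = 0 := by
        intro x y
        have h := (coeffs x (J y)).1
        rw [hJJ y, sbbneg] at h
        linarith
      have hgk : ∀ x y, sgg x (J y) + sgg (J x) y = 0 := by
        intro x y
        have h := (coeffs x (J y)).2
        rw [hJJ y, sggneg] at h
        linarith
      -- components of J (E 5) and J (E 1)
      have z50 : (J (E 5)) 0 = 0 := by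
        have h := hbk (E 5) (E 1)
        simpa [sbb, E_val] using h
      have z51 : (J (E 5)) 1 = 0 := by
        have h := hbk (E 5) (E 0)
        simpa [sbb, E_val] using h
      have g10 : (J (E 1)) 0 = 0 := by
        have h := hgk (E 1) (E 4)
        simpa [sgg, E_val] using h
      have g14 : (J (E 1)) 4 = 0 := by
        have h := hgk (E 1) (E 0)
        simpa [sgg, E_val] using h
      have g12 : (J (E 1)) 2 = 0 := by
        have h := hgk (E 1) (E 3)
        simpa [sgg, E_val] using h
      have g13 : (J (E 1)) 3 = 0 := by
        have h := hgk (E 1) (E 2)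
        simpa [sgg, E_val] using h
      have g11 : (J (E 1)) 1 = 0 := by
        have h := ipJself (E 1)
        rwa [ip_E_right] at h
      have g15 : (J (E 1)) 5 = 0 := by
        have h := skewadj (E 1) (E 5)
        rw [ip_E_right] at h
        have h2 : ip (E 1) (J (E 5)) = (J (E 5)) 1 := ip_E_left _ _
        rw [h2, z51] at h
        simpa using h
      have hJe1 : J (E 1) = 0 := by
        funext i
        simp only [Pi.zero_apply]
        fin_cases i
        · exact g10
        · exact g11
        · exact g12
        · exact g13
        · exact g14
        · exact g15
      have hcontr := hJJ (E 1)
      rw [hJe1, hJ0] at hcontr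
      have hval := congrFun hcontr 1
      simp only [Pi.zero_apply, Pi.neg_apply, E_val] at hval
      norm_num at hval
  refine ⟨main, fun J hJ h0 => main J hJ ?_⟩
  intro X Y Z
  constructor
  · rw [h0 Y X, h0 X Y]
    simp [ip_zero_left]
  · rw [h0 X Z, h0 X Y]
    simp [ip_zero_left]
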